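/- arXiv:2102.10364 — 5 statements merged into one kernel-verified Lean document; each statement's English description precedes it below -/
import Mathlib

section
/- For every integer k ≥ 1, setting m = k² + k − 1 and M = (m−1)/2, one has the identity t^{e(k−1,k)}·D_{k−1,k}(t) = (t² − 1)·Ψ_m(t) in ℤ[t, t⁻¹]; in particular D_{k−1,k}(t) = (t^{k²+k−1} + 1)(t − 1). -/
open LaurentPolynomial

/-- The Laurent polynomial `D_{n,k}(t) = -t^{(k+2)n+1} + t^{(k+1)(n+1)}(t^{k+1}+1)
- t^{k(n+3)+1} + t - 1` in `ℤ[t,t⁻¹]`. -/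
noncomputable def D (n k : ℤ) : LaurentPolynomial ℤ :=
  -T ((k + 2) * n + 1) + T ((k + 1) * (n + 1)) * (T (k + 1) + 1) -
    T (k * (n + 3) + 1) + T 1 - 1

/-- The exponent `e(n,k) = n(n-1)/2 + k(k-1) - 2nk`. -/
def e (n k : ℤ) : ℤ := n * (n - 1) / 2 + k * (k - 1) - 2 * n * k

/-- For odd `m ≥ 1` with `M = (m-1)/2`, the symmetric Laurent polynomial
`Ψ_m(t) = ∑_{j=-M}^{M} (-1)^{M+j} t^j`. -/
noncomputable def Psi (m : ℤ) : LaurentPolynomial ℤ :=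
  ∑ j ∈ Finset.Icc (-((m - 1) / 2)) ((m - 1) / 2),
    ((((m - 1) / 2 + j).negOnePow : ℤ) : LaurentPolynomial ℤ) * T j

lemma key (M : ℤ) (hM : 0 ≤ M) :
    (T 1 + 1) * ∑ j ∈ Finset.Icc (-M) M,
        (((M + j).negOnePow : ℤ) : LaurentPolynomial ℤ) * T j
      = T (M + 1) + T (-M) := by
  refine Int.le_induction (motive := fun M _ => (T 1 + 1) * ∑ j ∈ Finset.Icc (-M) M,
        (((M + j).negOnePow : ℤ) : LaurentPolynomial ℤ) * T j
      = T (M + 1) + T (-M)) ?_ ?_ M hM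
  · simp [T_zero]
  · intro N hN ih
    have hs : Finset.Icc (-(N+1)) (N+1)
        = insert (-(N+1)) (insert (N+1) (Finset.Icc (-N) N)) := by
      ext x
      simp only [Finset.mem_Icc, Finset.mem_insert]
      omega
    have h1 : (-(N+1)) ∉ insert (N+1) (Finset.Icc (-N) N) := by
      simp only [Finset.mem_Icc, Finset.mem_insert]; omega
    have h2 : (N+1) ∉ Finset.Icc (-N) N := by
      simp only [Finset.mem_Icc]; omega
    have hsum : ∑ j ∈ Finset.Icc (-N) N,
        (((N + 1 + j).negOnePow : ℤ) : LaurentPolynomial ℤ) * T j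
        = -∑ j ∈ Finset.Icc (-N) N,
            (((N + j).negOnePow : ℤ) : LaurentPolynomial ℤ) * T j := by
      rw [← Finset.sum_neg_distrib]
      refine Finset.sum_congr rfl fun j _ => ?_
      have hj : N + 1 + j = (N + j) + 1 := by ring
      rw [hj, Int.negOnePow_succ]
      push_cast
      ring
    rw [hs, Finset.sum_insert h1, Finset.sum_insert h2, hsum]
    have hc1 : (((N + 1 + -(N+1)).negOnePow : ℤ) : LaurentPolynomial ℤ) = 1 := by
      rw [show N + 1 + -(N+1) = 0 by ring, Int.negOnePow_zero]
      simp
    have hc2 : (((N + 1 + (N+1)).negOnePow : ℤ) : LaurentPolynomial ℤ) = 1 := by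
      rw [show N + 1 + (N+1) = 2*(N+1) by ring, Int.negOnePow_two_mul]
      simp
    rw [hc1, hc2]
    have e1 : (T 1 : LaurentPolynomial ℤ) * T (-(N+1)) = T (-N) := by
      rw [← T_add]; congr 1; ring
    have e2 : (T 1 : LaurentPolynomial ℤ) * T (N+1) = T (N+1+1) := by
      rw [← T_add]; congr 1; ring
    linear_combination e1 + e2 - ih

/-- For `k ≥ 1`, with `m = k² + k - 1`, one has
`t^{e(k-1,k)} · D_{k-1,k}(t) = (t² - 1) · Ψ_m(t)`; in particular
`D_{k-1,k}(t) = (t^{k²+k-1} + 1)(t - 1)`. -/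
theorem D_pred_k_eq (k : ℤ) (hk : 1 ≤ k) :
    T (e (k - 1) k) * D (k - 1) k = (T 2 - 1) * Psi (k ^ 2 + k - 1) ∧
    D (k - 1) k = (T (k ^ 2 + k - 1) + 1) * (T 1 - 1) := by
  obtain ⟨r, hr⟩ := Int.even_mul_succ_self k
  have hp : k ^ 2 + k = 2 * r := by linear_combination hr
  set M : ℤ := r - 1 with hMdef
  have hM0 : 0 ≤ M := by nlinarith [sq_nonneg (k - 1)]
  -- second part
  have q0 : (T ((k+2)*(k-1)+1) : LaurentPolynomial ℤ) = T (k^2+k-1) := by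
    congr 1; ring
  have q1 : (T ((k+1)*(k-1+1)) : LaurentPolynomial ℤ) = T (k^2+k-1) * T 1 := by
    rw [← T_add]; congr 1; ring
  have q2 : (T (k*(k-1+3)+1) : LaurentPolynomial ℤ)
      = T (k^2+k-1) * T (k+1) * T 1 := by
    rw [← T_add, ← T_add]; congr 1; ring
  have hD : D (k - 1) k = (T (k ^ 2 + k - 1) + 1) * (T 1 - 1) := by
    unfold D
    rw [q0, q1, q2]
    ring
  refine ⟨?_, hD⟩
  have he : e (k - 1) k = -M := by
    unfold e
    rw [show (k-1) * (k-1-1) = 2 * (r - 2*k + 1) by linear_combination hr,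
        Int.mul_ediv_cancel_left _ two_ne_zero, hMdef]
    linear_combination -hp
  have hPsi : Psi (k ^ 2 + k - 1)
      = ∑ j ∈ Finset.Icc (-M) M,
          (((M + j).negOnePow : ℤ) : LaurentPolynomial ℤ) * T j := by
    unfold Psi
    rw [show k ^ 2 + k - 1 - 1 = 2 * (r - 1) by linear_combination hp,
        Int.mul_ediv_cancel_left _ two_ne_zero, hMdef]
  have hkey := key M hM0
  have hm : k ^ 2 + k - 1 = M + 1 + M := by rw [hMdef]; linear_combination hp
  rw [hPsi, he, hD, hm]
  have f1 : (T (M + 1 + M) : LaurentPolynomial ℤ) = T (M + 1) * T M := T_add _ _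
  have f2 : (T (-M) : LaurentPolynomial ℤ) * T M = 1 := by
    rw [← T_add, neg_add_cancel, T_zero]
  have f3 : (T 2 : LaurentPolynomial ℤ) = T 1 * T 1 := by
    rw [show (2:ℤ) = 1 + 1 by norm_num, T_add]
  rw [f1, f3]
  linear_combination (-(T 1 - 1) : LaurentPolynomial ℤ) * hkey
    + ((T 1 - 1) * T (M + 1) : LaurentPolynomial ℤ) * f2
end

section
/- For every integer k ≥ 1, setting m = 2k² + 4k + 1 and M = (m−1)/2, one has the identity t^{e(2k+1,k)}·D_{2k+1,k}(t) = (t² − 1)·Ψ_m(t) in ℤ[t, t⁻¹]; in particular D_{2k+1,k}(t) = (t^{2k²+4k+1} + 1)(t − 1). -/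
open LaurentPolynomial

noncomputable def S (M : ℕ) : LaurentPolynomial ℤ :=
  ∑ j ∈ Finset.Icc (-(M:ℤ)) (M:ℤ),
    ((((M:ℤ) + j).negOnePow : ℤ) : LaurentPolynomial ℤ) * T j

lemma S_succ (M : ℕ) : S (M+1) = T ((M:ℤ)+1) + T (-((M:ℤ)+1)) - S M := by
  have hset : Finset.Icc (-((M:ℤ)+1)) ((M:ℤ)+1)
      = insert (-((M:ℤ)+1)) (insert ((M:ℤ)+1) (Finset.Icc (-(M:ℤ)) (M:ℤ))) := by
    ext x; simp; omega
  have h1 : (-((M:ℤ)+1)) ∉ insert ((M:ℤ)+1) (Finset.Icc (-(M:ℤ)) (M:ℤ)) := by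
    simp; omega
  have h2 : ((M:ℤ)+1) ∉ Finset.Icc (-(M:ℤ)) (M:ℤ) := by simp
  simp only [S, Nat.cast_add, Nat.cast_one, hset, Finset.sum_insert h1,
    Finset.sum_insert h2]
  have e1 : ((M:ℤ)+1 + -((M:ℤ)+1)).negOnePow = 1 := by
    rw [show ((M:ℤ)+1 + -((M:ℤ)+1)) = 2*0 by ring]; exact Int.negOnePow_two_mul _
  have e2 : ((M:ℤ)+1 + ((M:ℤ)+1)).negOnePow = 1 := by
    rw [show ((M:ℤ)+1 + ((M:ℤ)+1)) = 2*((M:ℤ)+1) by ring]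
    exact Int.negOnePow_two_mul _
  rw [e1, e2]
  have : ∀ j ∈ Finset.Icc (-(M:ℤ)) (M:ℤ),
      ((((M:ℤ)+1 + j).negOnePow : ℤ) : LaurentPolynomial ℤ) * T j
      = -(((((M:ℤ) + j).negOnePow : ℤ) : LaurentPolynomial ℤ) * T j) := by
    intro j _
    have : ((M:ℤ)+1 + j) = ((M:ℤ) + j) + 1 := by ring
    rw [this, Int.negOnePow_succ]
    push_cast
    ring
  rw [Finset.sum_congr rfl this, Finset.sum_neg_distrib]
  push_cast
  ring

lemma key_S (M : ℕ) : (T 1 + 1) * S M = T ((M:ℤ)+1) + T (-(M:ℤ)) := by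
  induction M with
  | zero =>
    have : S 0 = 1 := by
      simp [S, T_zero]
    rw [this]
    simp [T_zero]
  | succ M ih =>
    rw [S_succ, mul_sub, ih]
    push_cast
    rw [add_mul, one_mul, mul_add, ← T_add, ← T_add,
      show (1 + ((M:ℤ)+1)) = (M:ℤ)+1+1 by ring,
      show (1 + -((M:ℤ)+1)) = -(M:ℤ) by ring]
    ring

lemma psi_eq_S (M : ℕ) : Psi (2*(M:ℤ)+1) = S M := by
  have h : (2*(M:ℤ)+1-1)/2 = (M:ℤ) := by omega
  simp only [Psi, S, h]

/-- For `k ≥ 1`, with `m = 2k² + 4k + 1`, one has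
`t^{e(2k+1,k)} · D_{2k+1,k}(t) = (t² - 1) · Ψ_m(t)`; in particular
`D_{2k+1,k}(t) = (t^{2k²+4k+1} + 1)(t - 1)`. -/
theorem D_two_k_add_one_k_eq (k : ℤ) (hk : 1 ≤ k) :
    T (e (2 * k + 1) k) * D (2 * k + 1) k = (T 2 - 1) * Psi (2 * k ^ 2 + 4 * k + 1) ∧
    D (2 * k + 1) k = (T (2 * k ^ 2 + 4 * k + 1) + 1) * (T 1 - 1) := by
  set Mz : ℤ := k^2 + 2*k with hMz
  have hM0 : 0 ≤ Mz := by nlinarith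
  obtain ⟨M, hM⟩ : ∃ M : ℕ, (M : ℤ) = Mz := ⟨Mz.toNat, Int.toNat_of_nonneg hM0⟩
  -- second part
  have hD : D (2 * k + 1) k = (T (2 * k ^ 2 + 4 * k + 1) + 1) * (T 1 - 1) := by
    rw [D,
      show (k + 2) * (2*k+1) + 1 = (2*k^2+4*k+2) + (k+1) by ring,
      show (k + 1) * ((2*k+1) + 1) = 2*k^2+4*k+2 by ring,
      show k * ((2*k+1) + 3) + 1 = 2*k^2+4*k+1 by ring,
      T_add, show (2*k^2+4*k+2 : ℤ) = (2*k^2+4*k+1) + 1 by ring, T_add]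
    ring
  refine ⟨?_, hD⟩
  -- exponent e
  have he : e (2 * k + 1) k = -Mz := by
    rw [e, show (2*k+1) * (2*k+1-1) = 2*(2*k^2+k) by ring,
      Int.mul_ediv_cancel_left _ two_ne_zero, hMz]
    ring
  have hkey : (T 1 + 1) * Psi (2 * k ^ 2 + 4 * k + 1) = T (Mz+1) + T (-Mz) := by
    rw [show (2 * k ^ 2 + 4 * k + 1 : ℤ) = 2*(M:ℤ)+1 by rw [hM]; ring, psi_eq_S,
      key_S, hM]
  have h2 : (T 2 : LaurentPolynomial ℤ) - 1 = (T 1 - 1) * (T 1 + 1) := by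
    rw [show (2:ℤ) = 1 + 1 by ring, T_add]; ring
  have h3 : (T (-Mz) : LaurentPolynomial ℤ) * (T (2*k^2+4*k+1) + 1) = T (Mz+1) + T (-Mz) := by
    rw [mul_add, mul_one, ← T_add, show (-Mz + (2*k^2+4*k+1)) = Mz+1 by rw [hMz]; ring]
  rw [hD, he, h2, mul_assoc, hkey,
    show (T (-Mz) : LaurentPolynomial ℤ) * ((T (2*k^2+4*k+1) + 1) * (T 1 - 1))
      = (T (-Mz) * (T (2*k^2+4*k+1) + 1)) * (T 1 - 1) by ring, h3]
  ring
end

section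
/- Let k ≥ 1 be an integer and n ∈ ℤ, and let V_{n,k} ∈ ℤ[t, t⁻¹] be the unique Laurent polynomial with (t² − 1)·V_{n,k}(t) = t^{e(n,k)}·D_{n,k}(t). Then V_{n,k} is symmetric (i.e., its coefficient of t^j equals its coefficient of t^{−j} for all j ∈ ℤ) if and only if n = k−1, n = k, n = 2k, or n = 2k+1. -/
open LaurentPolynomial

noncomputable def phi4 : LaurentPolynomial ℤ →+ ℤ :=
  (Finsupp.liftAddHom fun m => AddMonoidHom.mulRight (m ^ 4)).comp
    AddMonoidAlgebra.coeffAddEquiv.toAddMonoidHom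

lemma phi4_T (m : ℤ) : phi4 (T m) = m ^ 4 := by
  have h : AddMonoidAlgebra.coeffAddEquiv.toAddMonoidHom (T m : LaurentPolynomial ℤ)
      = Finsupp.single m 1 := rfl
  rw [phi4, AddMonoidHom.comp_apply]
  erw [h, Finsupp.liftAddHom_apply_single]
  exact one_mul _

lemma phi4_one : phi4 (1 : LaurentPolynomial ℤ) = 0 := by
  rw [← T_zero, phi4_T]; norm_num

lemma two_e (n k : ℤ) : 2 * e n k = n ^ 2 - n + 2 * k ^ 2 - 2 * k - 4 * n * k := by
  obtain ⟨c, hc⟩ := Int.even_mul_succ_self (n - 1)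
  have h1 : n * (n - 1) = c + c := by linear_combination hc
  have h2 : n * (n - 1) / 2 = c := by rw [h1]; omega
  unfold e
  rw [h2]
  linear_combination -h1

lemma helper (b : ℤ) :
    invert (T b - T (b - 1) + T 1 - 1 : LaurentPolynomial ℤ)
      = -T (-b) * (T b - T (b - 1) + T 1 - 1) := by
  simp only [map_sub, map_add, map_one, invert_T, neg_mul, mul_sub, mul_add, mul_one,
    ← T_add]
  rw [show -b + b = 0 by ring, show -b + (b - 1) = -1 by ring, show -b + 1 = -(b-1) by ring,
    T_zero]
  ring

lemma T_ne (a b : ℤ) (h : a ≠ b) : (T a : LaurentPolynomial ℤ) ≠ T b := by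
  intro hT
  have := congrArg (fun f : LaurentPolynomial ℤ => f.coeff a) hT
  simp only [LaurentPolynomial.T, Finsupp.single_apply] at this
  simp [h.symm] at this

lemma T_mul_TA (x y : ℤ) : (T x : LaurentPolynomial ℤ) * (T y + 1) = T (x + y) + T x := by
  rw [mul_add, mul_one, ← T_add]

lemma Dk (k : ℤ) : D k k = T ((k+1)*(k+2)) - T ((k+1)*(k+2) - 1) + T 1 - 1 := by
  unfold D
  rw [T_mul_TA,
    show (k+1)*(k+1) + (k+1) = (k+1)*(k+2) by ring,
    show (k+2)*k + 1 = (k+1)*(k+1) by ring,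
    show k*(k+3) + 1 = (k+1)*(k+2) - 1 by ring]
  ring

lemma Dkm1 (k : ℤ) : D (k-1) k = T (k*(k+1)) - T (k*(k+1) - 1) + T 1 - 1 := by
  unfold D
  rw [T_mul_TA,
    show (k+1)*(k-1+1) + (k+1) = (k+1)*(k+1) by ring,
    show (k+2)*(k-1) + 1 = k*(k+1) - 1 by ring,
    show k*(k-1+3) + 1 = (k+1)*(k+1) by ring,
    show (k+1)*(k-1+1) = k*(k+1) by ring]
  ring

lemma D2k (k : ℤ) : D (2*k) k = T (2*(k+1)^2) - T (2*(k+1)^2 - 1) + T 1 - 1 := by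
  unfold D
  rw [T_mul_TA,
    show (k+1)*(2*k+1) + (k+1) = 2*(k+1)^2 by ring,
    show (k+2)*(2*k) + 1 = 2*(k+1)^2 - 1 by ring,
    show k*(2*k+3) + 1 = (k+1)*(2*k+1) by ring]
  ring

lemma D2k1 (k : ℤ) : D (2*k+1) k = T (2*(k+1)^2) - T (2*(k+1)^2 - 1) + T 1 - 1 := by
  unfold D
  rw [T_mul_TA,
    show (k+1)*(2*k+1+1) + (k+1) = (k+2)*(2*k+1) + 1 by ring,
    show (k+1)*(2*k+1+1) = 2*(k+1)^2 by ring,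
    show k*(2*k+1+3) + 1 = 2*(k+1)^2 - 1 by ring]
  ring

/-- For `k ≥ 1` and `n ∈ ℤ`, the Laurent polynomial `V_{n,k}` determined by
`(t² - 1) · V_{n,k} = t^{e(n,k)} · D_{n,k}` is symmetric (its coefficient of `t^j`
equals its coefficient of `t^{-j}` for all `j`) if and only if
`n = k - 1`, `n = k`, `n = 2k`, or `n = 2k + 1`. -/
theorem V_symmetric_iff (k : ℤ) (hk : 1 ≤ k) (n : ℤ) (V : LaurentPolynomial ℤ)
    (hV : (T 2 - 1) * V = T (e n k) * D n k) :
    (∀ j : ℤ, V.coeff j = V.coeff (-j)) ↔ (n = k - 1 ∨ n = k ∨ n = 2 * k ∨ n = 2 * k + 1) := by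
  have hsym : (∀ j : ℤ, V.coeff j = V.coeff (-j)) ↔ invert V = V := by
    constructor
    · intro h
      ext j
      rw [invert_apply]
      exact (h j).symm
    · intro h j
      conv_rhs => rw [← h, invert_apply, neg_neg]
  have key1 : (T (-2) - 1) * V = -T (e n k - 2) * D n k := by
    have h0 : (T (-2) - 1 : LaurentPolynomial ℤ) = -T (-2) * (T 2 - 1) := by
      rw [neg_mul, mul_sub, ← T_add, mul_one,
        show (-2 : ℤ) + 2 = 0 by ring, T_zero]
      ring
    rw [h0, mul_assoc, hV, ← mul_assoc, neg_mul, neg_mul, ← T_add,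
      show (-2 : ℤ) + e n k = e n k - 2 by ring]
    exact (neg_mul _ _).symm
  have hTne : (T (-2) - 1 : LaurentPolynomial ℤ) ≠ 0 := by
    intro h
    have h1 : (T (-2) : LaurentPolynomial ℤ) = T 0 := by
      rw [T_zero]; exact sub_eq_zero.mp h
    exact T_ne (-2) 0 (by norm_num) h1
  have hmain : invert V = V ↔ invert (D n k) = -T (2 * e n k - 2) * D n k := by
    constructor
    · intro h
      have h2 := congrArg invert hV
      rw [map_mul, map_mul, map_sub, map_one, invert_T, invert_T, h, key1] at h2
      -- h2 : -T (e n k - 2) * D n k = T (-(e n k)) * invert (D n k)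
      have h4 := congrArg (fun x => T (e n k) * x) h2
      rw [← mul_assoc, ← mul_assoc, mul_neg, ← T_add, ← T_add,
        show e n k + (e n k - 2) = 2 * e n k - 2 by ring,
        show e n k + -(e n k) = 0 by ring, T_zero, one_mul] at h4
      rw [← h4, neg_mul]
    · intro h
      have h2 := congrArg invert hV
      rw [map_mul, map_mul, map_sub, map_one, invert_T, invert_T, h] at h2
      -- h2 : (T (-2) - 1) * invert V = T (-(e n k)) * (-T (2*e n k - 2) * D n k)
      rw [neg_mul, mul_neg, ← mul_assoc, ← T_add,
        show -e n k + (2 * e n k - 2) = e n k - 2 by ring, ← neg_mul, ← key1] at h2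
      exact mul_left_cancel₀ hTne h2
  rw [hsym, hmain]
  constructor
  · intro H
    have hs2 : 2 * e n k - 2 = n^2 - n + 2*k^2 - 2*k - 4*n*k - 2 := by
      linear_combination two_e n k
    rw [hs2] at H
    have E : phi4 (invert (D n k))
        = phi4 (-T (n^2 - n + 2*k^2 - 2*k - 4*n*k - 2) * D n k) := by rw [H]
    simp only [D, map_add, map_sub, map_mul, map_neg, map_one, invert_T, neg_mul,
      mul_add, mul_sub, mul_one, mul_neg, ← T_add, phi4_T, phi4_one] at E
    have key4 : (-4) * ((n-(k-1))*(n-k)*(n-2*k)*(n-2*k-1)*(n^2+3*n+2*k^2+4*k+2)) = 0 := by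
      linear_combination E
    have hprod : (n-(k-1))*(n-k)*(n-2*k)*(n-2*k-1)*(n^2+3*n+2*k^2+4*k+2) = 0 := by
      rcases mul_eq_zero.mp key4 with h | h
      · norm_num at h
      · exact h
    have hQ : 0 < n^2+3*n+2*k^2+4*k+2 := by
      nlinarith [sq_nonneg (2*n+3), sq_nonneg (k-1), hk]
    have h5 : (n-(k-1))*(n-k)*(n-2*k)*(n-2*k-1) = 0 := by
      rcases mul_eq_zero.mp hprod with h | h
      · exact h
      · exact absurd h hQ.ne'
    rcases mul_eq_zero.mp h5 with h6 | h6
    · rcases mul_eq_zero.mp h6 with h7 | h7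
      · rcases mul_eq_zero.mp h7 with h8 | h8
        · omega
        · omega
      · omega
    · omega
  · intro H
    rcases H with h | h | h | h <;> rw [h]
    · rw [Dkm1 k, show 2 * e (k-1) k - 2 = -(k*(k+1)) by linear_combination two_e (k-1) k]
      exact helper _
    · rw [Dk k, show 2 * e k k - 2 = -((k+1)*(k+2)) by linear_combination two_e k k]
      exact helper _
    · rw [D2k k, show 2 * e (2*k) k - 2 = -(2*(k+1)^2) by linear_combination two_e (2*k) k]
      exact helper _
    · rw [D2k1 k, show 2 * e (2*k+1) k - 2 = -(2*(k+1)^2) by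
        linear_combination two_e (2*k+1) k]
      exact helper _
end

section
/- Let p be a prime and r ∈ ℕ. Let N = p^r, N = 3p^r, N = 4p^r, or (assuming p ≠ 3) N = 6p^r. Then there is no Laurent polynomial P ∈ ℤ[t, t⁻¹] such that the N-th cyclotomic polynomial Φ_N divides P in ℤ[t, t⁻¹] and P satisfies P(1) = 1, P(e^{2πi/3}) = 1, |P(i)| = 1, and |P(e^{πi/3})| = 3^{s/2} for some s ∈ ℕ (evaluations taken in ℂ). -/
open Polynomial LaurentPolynomial

/-- Evaluation of an integer Laurent polynomial at a complex number `z`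
(meaningful for `z ≠ 0`): `∑_j a_j z^j`. -/
noncomputable def evalC (z : ℂ) (P : LaurentPolynomial ℤ) : ℂ :=
  ∑ j ∈ P.coeff.support, (P.coeff j : ℂ) * z ^ j


set_option linter.unusedVariables false
set_option linter.unusedSectionVars false

noncomputable def evalHom (z : ℂ) (hz : z ≠ 0) : LaurentPolynomial ℤ →ₐ[ℤ] ℂ :=
  AddMonoidAlgebra.lift ℤ ℂ ℤ ((Units.coeHom ℂ).comp (zpowersHom ℂˣ (Units.mk0 z hz)))

theorem evalC_eq (z : ℂ) (hz : z ≠ 0) (P : LaurentPolynomial ℤ) :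
    evalC z P = evalHom z hz P := by
  rw [evalHom, AddMonoidAlgebra.lift_apply, evalC, Finsupp.sum]
  exact Finset.sum_congr rfl fun j hj => by
    simp [zpowersHom_apply, Units.val_zpow_eq_zpow_val, zsmul_eq_mul]

theorem evalHom_toLaurent (z : ℂ) (hz : z ≠ 0) (f : Polynomial ℤ) :
    evalHom z hz (toLaurent f) = aeval z f := by
  have : (evalHom z hz).comp (toLaurentAlg (R := ℤ)) = aeval z := by
    apply Polynomial.algHom_ext
    rw [AlgHom.comp_apply, Polynomial.toLaurentAlg_apply, Polynomial.toLaurent_X, aeval_X]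
    show AddMonoidAlgebra.lift ℤ ℂ ℤ _ (AddMonoidAlgebra.single 1 1) = z
    rw [AddMonoidAlgebra.lift_single]
    show (1:ℤ) • ((Units.mk0 z hz ^ (1:ℤ) : ℂˣ) : ℂ) = z
    simp
  calc evalHom z hz (toLaurent f) = ((evalHom z hz).comp toLaurentAlg) f := by
        rw [AlgHom.comp_apply, Polynomial.toLaurentAlg_apply]
    _ = aeval z f := by rw [this]

theorem evalC_mul_toLaurent (z : ℂ) (hz : z ≠ 0) (f : Polynomial ℤ) (Q : LaurentPolynomial ℤ) :
    evalC z (toLaurent f * Q) = aeval z f * evalC z Q := by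
  rw [evalC_eq z hz, evalC_eq z hz, map_mul, evalHom_toLaurent]

/-- Representation in ℤ + ℤω. -/
theorem evalC_rep (ω : ℂ) (hω : ω ≠ 0) (k : ℕ) (hk : 0 < k) (hωk : ω ^ k = 1)
    (c d : ℤ) (hsq : ω ^ 2 = c + d * ω) (P : LaurentPolynomial ℤ) :
    ∃ a b : ℤ, evalC ω P = a + b * ω := by
  have hnat : ∀ m : ℕ, ∃ a b : ℤ, ω ^ m = a + b * ω := by
    intro m
    induction m with
    | zero => exact ⟨1, 0, by simp⟩
    | succ n ih =>
      obtain ⟨a, b, hab⟩ := ih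
      refine ⟨b * c, a + b * d, ?_⟩
      rw [pow_succ, hab]
      push_cast
      linear_combination (b : ℂ) * hsq
  have hint : ∀ j : ℤ, ∃ a b : ℤ, ω ^ j = a + b * ω := by
    intro j
    have h1 : ω ^ j = (ω ^ (k : ℤ)) ^ (j / k) * ω ^ (j % k) := by
      rw [← zpow_mul, ← zpow_add₀ hω]
      congr 1
      exact (Int.mul_ediv_add_emod j k).symm
    have h2 : ω ^ (k : ℤ) = 1 := by rw [zpow_natCast, hωk]
    have h3 : ω ^ (j % k) = ω ^ (j % k).toNat := by
      rw [← zpow_natCast, Int.toNat_of_nonneg (Int.emod_nonneg j (by exact_mod_cast hk.ne'))]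
    rw [h1, h2, one_zpow, one_mul, h3]
    exact hnat _
  rw [evalC]
  refine Finset.sum_induction _ (fun z => ∃ a b : ℤ, z = a + b * ω) ?_ ⟨0, 0, by simp⟩ ?_
  · rintro x y ⟨a, b, hab⟩ ⟨a', b', hab'⟩
    exact ⟨a + a', b + b', by rw [hab, hab']; push_cast; ring⟩
  · intro j _
    obtain ⟨a, b, hab⟩ := hint j
    exact ⟨P.coeff j * a, P.coeff j * b, by rw [hab]; push_cast; ring⟩

/-- normSq of a + bω is an integer given ω on unit circle with 2re(ω) = e ∈ ℤ. -/
theorem normSq_rep (ω : ℂ) (e : ℤ) (hre : 2 * ω.re = (e : ℝ)) (hnorm : Complex.normSq ω = 1)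
    (a b : ℤ) : Complex.normSq ((a : ℂ) + (b : ℂ) * ω) = ((a ^ 2 + e * a * b + b ^ 2 : ℤ) : ℝ) := by
  rw [Complex.normSq_apply] at hnorm ⊢
  simp only [Complex.add_re, Complex.add_im, Complex.mul_re, Complex.mul_im,
    Complex.intCast_re, Complex.intCast_im]
  push_cast
  linear_combination ((a : ℝ) * (b : ℝ)) * hre + ((b : ℝ) ^ 2) * hnorm

section Char3
-- ω primitive cube root characterized by ω² + ω + 1 = 0
variable {ω : ℂ} (h3 : ω ^ 2 + ω + 1 = 0)
include h3

theorem c3_re : ω.re = -(1/2) := by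
  have h2 : ω.re * ω.im + ω.im * ω.re + ω.im = 0 := by
    have := congrArg Complex.im h3
    simpa [pow_two, Complex.mul_im] using this
  have h1 : ω.re * ω.re - ω.im * ω.im + ω.re + 1 = 0 := by
    have := congrArg Complex.re h3
    simpa [pow_two, Complex.mul_re] using this
  have him : ω.im ≠ 0 := by
    intro h0
    rw [h0] at h1
    nlinarith
  have : ω.im * (2 * ω.re + 1) = 0 := by linarith [h2]
  have := (mul_eq_zero.mp this).resolve_left him
  linarith

theorem c3_im2 : ω.im ^ 2 = 3/4 := by
  have h1 : ω.re * ω.re - ω.im * ω.im + ω.re + 1 = 0 := by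
    have := congrArg Complex.re h3
    simpa [pow_two, Complex.mul_re] using this
  have := c3_re h3
  nlinarith

theorem c3_normSq : Complex.normSq ω = 1 := by
  rw [Complex.normSq_apply]
  nlinarith [c3_re h3, c3_im2 h3]

theorem c3_ne_zero : ω ≠ 0 := by
  intro h0; rw [h0] at h3; norm_num at h3

theorem c3_cube : ω ^ 3 = 1 := by linear_combination (ω - 1) * h3

theorem c3_sq_char : (ω ^ 2) ^ 2 + ω ^ 2 + 1 = 0 := by
  linear_combination ω * c3_cube h3 + h3

theorem c3_normSq_sub_one : Complex.normSq (ω - 1) = 3 := by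
  rw [Complex.normSq_apply]
  simp only [Complex.sub_re, Complex.sub_im, Complex.one_re, Complex.one_im]
  nlinarith [c3_re h3, c3_im2 h3]

theorem c3_normSq_sq_sub_one : Complex.normSq (ω ^ 2 - 1) = 3 := by
  have h : ω ^ 2 - 1 = -2 - ω := by linear_combination h3
  rw [h, Complex.normSq_apply]
  simp only [Complex.sub_re, Complex.sub_im, Complex.neg_re, Complex.neg_im]
  norm_num
  nlinarith [c3_re h3, c3_im2 h3]

theorem c3_pow_mod {p : ℕ} (hp : p.Prime) (hp3 : p ≠ 3) : ω ^ p = ω ^ (p % 3) := by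
  conv_lhs => rw [← Nat.div_add_mod p 3]
  rw [pow_add, pow_mul, c3_cube h3, one_pow, one_mul]

omit h3 in
theorem c3_mod_cases {p : ℕ} (hp : p.Prime) (hp3 : p ≠ 3) : p % 3 = 1 ∨ p % 3 = 2 := by
  have : ¬ (3 ∣ p) := fun h => hp3 ((Nat.prime_dvd_prime_iff_eq (by norm_num) hp).mp h).symm
  omega

theorem c3_pow_char {p : ℕ} (hp : p.Prime) (hp3 : p ≠ 3) :
    (ω ^ p) ^ 2 + ω ^ p + 1 = 0 := by
  rw [c3_pow_mod h3 hp hp3]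
  rcases c3_mod_cases hp hp3 with h | h <;> rw [h]
  · simpa using h3
  · exact c3_sq_char h3

theorem c3_normSq_pow_sub_one {p : ℕ} (hp : p.Prime) (hp3 : p ≠ 3) :
    Complex.normSq (ω ^ p - 1) = 3 := by
  rw [c3_pow_mod h3 hp hp3]
  rcases c3_mod_cases hp hp3 with h | h <;> rw [h]
  · simpa using c3_normSq_sub_one h3
  · exact c3_normSq_sq_sub_one h3

end Char3
section CycPrime

theorem aeval_cyc_prime_mul {p : ℕ} (hp : p.Prime) (z : ℂ) :
    aeval z (cyclotomic p ℤ) * (z - 1) = z ^ p - 1 := by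
  haveI := Fact.mk hp
  rw [cyclotomic_prime]
  simp only [map_sum, map_pow, aeval_X]
  exact geom_sum_mul z p

theorem aeval_cyc_prime_one {p : ℕ} (hp : p.Prime) :
    aeval (1 : ℂ) (cyclotomic p ℤ) = p := by
  haveI := Fact.mk hp
  rw [aeval_def]
  exact eval₂_one_cyclotomic_prime _

theorem aeval_cyc_prime_neg_one {p : ℕ} (hp : p.Prime) (hodd : p ≠ 2) :
    aeval (-1 : ℂ) (cyclotomic p ℤ) = 1 := by
  have h := aeval_cyc_prime_mul hp (-1 : ℂ)
  have hpodd : Odd p := hp.odd_of_ne_two hodd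
  rw [hpodd.neg_one_pow] at h
  have h2 : (-1 : ℂ) - 1 = -2 := by norm_num
  rw [h2] at h
  have h3 : aeval (-1 : ℂ) (cyclotomic p ℤ) * (-2) = 1 * (-2) := by rw [h]; ring
  exact mul_right_cancel₀ (by norm_num : (-2 : ℂ) ≠ 0) h3

end CycPrime

section Char3Cyc

variable {ω : ℂ} (h3 : ω ^ 2 + ω + 1 = 0)
include h3

theorem c3_normSq_A_prime {p : ℕ} (hp : p.Prime) (hp3 : p ≠ 3) :
    Complex.normSq (aeval ω (cyclotomic p ℤ)) = 1 := by
  have h := congrArg Complex.normSq (aeval_cyc_prime_mul hp ω)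
  rw [Complex.normSq_mul, c3_normSq_sub_one h3, c3_normSq_pow_sub_one h3 hp hp3] at h
  linarith

theorem c3_A_3p {p : ℕ} (hp : p.Prime) (hp3 : p ≠ 3) :
    aeval ω (cyclotomic (3 * p) ℤ) * aeval ω (cyclotomic p ℤ) = p := by
  have hdiv : ¬ (3 ∣ p) := fun h => hp3 ((Nat.prime_dvd_prime_iff_eq (by norm_num) hp).mp h).symm
  have h := cyclotomic_expand_eq_cyclotomic_mul (by norm_num : Nat.Prime 3) hdiv ℤ
  have h2 := congrArg (aeval ω) h
  rw [expand_aeval, map_mul, c3_cube h3, aeval_cyc_prime_one hp, mul_comm p 3] at h2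
  exact h2.symm

theorem c3_normSq_A_3p {p : ℕ} (hp : p.Prime) (hp3 : p ≠ 3) :
    Complex.normSq (aeval ω (cyclotomic (3 * p) ℤ)) = (p : ℝ) ^ 2 := by
  have h := congrArg Complex.normSq (c3_A_3p h3 hp hp3)
  rw [Complex.normSq_mul, c3_normSq_A_prime h3 hp hp3, Complex.normSq_natCast] at h
  rw [mul_one] at h
  rw [h]; ring

end Char3Cyc

theorem c3_normSq_A_3pr {p : ℕ} (hp : p.Prime) (hp3 : p ≠ 3) :
    ∀ (r : ℕ) (ω : ℂ), ω ^ 2 + ω + 1 = 0 →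
      Complex.normSq (aeval ω (cyclotomic (3 * p ^ (r + 1)) ℤ)) = (p : ℝ) ^ 2 := by
  intro r
  induction r with
  | zero => intro ω h3; rw [pow_one]; exact c3_normSq_A_3p h3 hp hp3
  | succ n ih =>
    intro ω h3
    have hdvd : p ∣ 3 * p ^ (n + 1) := Dvd.dvd.mul_left (dvd_pow_self p (Nat.succ_ne_zero n)) 3
    have h := cyclotomic_expand_eq_cyclotomic hp hdvd ℤ
    have hN : 3 * p ^ (n + 1) * p = 3 * p ^ (n + 2) := by ring
    rw [hN] at h
    have h2 := congrArg (aeval ω) h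
    rw [expand_aeval] at h2
    rw [← h2]
    exact ih (ω ^ p) (c3_pow_char h3 hp hp3)
section Char4

variable {ω : ℂ} (h4 : ω ^ 2 = -1)
include h4

theorem c4_pow_char {p : ℕ} (hodd : Odd p) : (ω ^ p) ^ 2 = -1 := by
  rw [← pow_mul, mul_comm, pow_mul, h4, hodd.neg_one_pow]

omit h4 in
theorem c4_A_2p_neg_one {p : ℕ} (hp : p.Prime) (hp2 : p ≠ 2) :
    aeval (-1 : ℂ) (cyclotomic (2 * p) ℤ) = p := by
  have hdiv : ¬ (2 ∣ p) := fun h => hp2 ((Nat.prime_dvd_prime_iff_eq (by norm_num) hp).mp h).symm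
  have h := cyclotomic_expand_eq_cyclotomic_mul (by norm_num : Nat.Prime 2) hdiv ℤ
  have h2 := congrArg (aeval (-1 : ℂ)) h
  rw [expand_aeval, map_mul, aeval_cyc_prime_neg_one hp hp2] at h2
  have hsq : ((-1 : ℂ)) ^ 2 = 1 := by norm_num
  rw [hsq, aeval_cyc_prime_one hp, mul_comm p 2, mul_one] at h2
  exact h2.symm

theorem c4_A_4p {p : ℕ} (hp : p.Prime) (hp2 : p ≠ 2) :
    aeval ω (cyclotomic (4 * p) ℤ) = p := by
  have hdvd : (2 : ℕ) ∣ 2 * p := Dvd.intro p rfl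
  have h := cyclotomic_expand_eq_cyclotomic (by norm_num : Nat.Prime 2) hdvd ℤ
  have hN : 2 * p * 2 = 4 * p := by ring
  rw [hN] at h
  have h2 := congrArg (aeval ω) h
  rw [expand_aeval, h4] at h2
  rw [← h2, c4_A_2p_neg_one hp hp2]

omit h4 in
theorem c4_normSq_A_4pr {p : ℕ} (hp : p.Prime) (hp2 : p ≠ 2) :
    ∀ (r : ℕ) (ω : ℂ), ω ^ 2 = -1 →
      Complex.normSq (aeval ω (cyclotomic (4 * p ^ (r + 1)) ℤ)) = (p : ℝ) ^ 2 := by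
  intro r
  induction r with
  | zero =>
    intro ω h4
    rw [pow_one, c4_A_4p h4 hp hp2, Complex.normSq_natCast]
    ring
  | succ n ih =>
    intro ω h4
    have hdvd : p ∣ 4 * p ^ (n + 1) := Dvd.dvd.mul_left (dvd_pow_self p (Nat.succ_ne_zero n)) 4
    have h := cyclotomic_expand_eq_cyclotomic hp hdvd ℤ
    have hN : 4 * p ^ (n + 1) * p = 4 * p ^ (n + 2) := by ring
    rw [hN] at h
    have h2 := congrArg (aeval ω) h
    rw [expand_aeval] at h2
    rw [← h2]
    exact ih (ω ^ p) (c4_pow_char h4 (hp.odd_of_ne_two hp2))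

end Char4
section Char6

variable {ω : ℂ} (h6 : ω ^ 2 - ω + 1 = 0)
include h6

theorem c6_re : ω.re = 1/2 := by
  have h2 : ω.re * ω.im + ω.im * ω.re - ω.im = 0 := by
    have := congrArg Complex.im h6
    simpa [pow_two, Complex.mul_im] using this
  have h1 : ω.re * ω.re - ω.im * ω.im - ω.re + 1 = 0 := by
    have := congrArg Complex.re h6
    simpa [pow_two, Complex.mul_re] using this
  have him : ω.im ≠ 0 := by
    intro h0
    rw [h0] at h1
    nlinarith
  have : ω.im * (2 * ω.re - 1) = 0 := by linarith [h2]
  have := (mul_eq_zero.mp this).resolve_left him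
  linarith

theorem c6_im2 : ω.im ^ 2 = 3/4 := by
  have h1 : ω.re * ω.re - ω.im * ω.im - ω.re + 1 = 0 := by
    have := congrArg Complex.re h6
    simpa [pow_two, Complex.mul_re] using this
  have := c6_re h6
  nlinarith

theorem c6_normSq : Complex.normSq ω = 1 := by
  rw [Complex.normSq_apply]
  nlinarith [c6_re h6, c6_im2 h6]

theorem c6_ne_zero : ω ≠ 0 := by
  intro h0; rw [h0] at h6; norm_num at h6

theorem c6_cube : ω ^ 3 = -1 := by linear_combination (ω + 1) * h6

theorem c6_six : ω ^ 6 = 1 := by linear_combination (ω ^ 3 - 1) * c6_cube h6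

theorem c6_sq_char3 : (ω ^ 2) ^ 2 + ω ^ 2 + 1 = 0 := by
  linear_combination (ω ^ 2 + ω + 1) * h6

theorem c6_pow5 : ω ^ 5 = 1 - ω := by
  linear_combination ω ^ 2 * c6_cube h6 - h6

theorem c6_pow_mod (p : ℕ) : ω ^ p = ω ^ (p % 6) := by
  conv_lhs => rw [← Nat.div_add_mod p 6]
  rw [pow_add, pow_mul, c6_six h6, one_pow, one_mul]

omit h6 in
theorem c6_mod_cases {p : ℕ} (hp : p.Prime) (hp2 : p ≠ 2) (hp3 : p ≠ 3) :
    p % 6 = 1 ∨ p % 6 = 5 := by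
  have h2 : ¬ (2 ∣ p) := fun h => hp2 ((Nat.prime_dvd_prime_iff_eq (by norm_num) hp).mp h).symm
  have h3 : ¬ (3 ∣ p) := fun h => hp3 ((Nat.prime_dvd_prime_iff_eq (by norm_num) hp).mp h).symm
  omega

theorem c6_pow_char {p : ℕ} (hp : p.Prime) (hp2 : p ≠ 2) (hp3 : p ≠ 3) :
    (ω ^ p) ^ 2 - ω ^ p + 1 = 0 := by
  rw [c6_pow_mod h6 p]
  rcases c6_mod_cases hp hp2 hp3 with h | h <;> rw [h]
  · simpa using h6
  · rw [c6_pow5 h6]; linear_combination h6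

theorem c6_normSq_sub_one : Complex.normSq (ω - 1) = 1 := by
  rw [Complex.normSq_apply]
  simp only [Complex.sub_re, Complex.sub_im, Complex.one_re, Complex.one_im]
  nlinarith [c6_re h6, c6_im2 h6]

theorem c6_normSq_pow_sub_one {p : ℕ} (hp : p.Prime) (hp2 : p ≠ 2) (hp3 : p ≠ 3) :
    Complex.normSq (ω ^ p - 1) = 1 := by
  rw [c6_pow_mod h6 p]
  rcases c6_mod_cases hp hp2 hp3 with h | h <;> rw [h]
  · simpa using c6_normSq_sub_one h6
  · rw [c6_pow5 h6]
    have : (1 : ℂ) - ω - 1 = -ω := by ring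
    rw [this, Complex.normSq_neg]
    exact c6_normSq h6

theorem c6_normSq_A_prime {p : ℕ} (hp : p.Prime) (hp2 : p ≠ 2) (hp3 : p ≠ 3) :
    Complex.normSq (aeval ω (cyclotomic p ℤ)) = 1 := by
  have h := congrArg Complex.normSq (aeval_cyc_prime_mul hp ω)
  rw [Complex.normSq_mul, c6_normSq_sub_one h6, c6_normSq_pow_sub_one h6 hp hp2 hp3] at h
  linarith

theorem c6_normSq_A_3p {p : ℕ} (hp : p.Prime) (hp2 : p ≠ 2) (hp3 : p ≠ 3) :
    Complex.normSq (aeval ω (cyclotomic (3 * p) ℤ)) = 1 := by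
  have hdiv : ¬ (3 ∣ p) := fun h => hp3 ((Nat.prime_dvd_prime_iff_eq (by norm_num) hp).mp h).symm
  have h := cyclotomic_expand_eq_cyclotomic_mul (by norm_num : Nat.Prime 3) hdiv ℤ
  have h2 := congrArg (aeval ω) h
  rw [expand_aeval, map_mul, c6_cube h6, aeval_cyc_prime_neg_one hp hp2, mul_comm p 3] at h2
  have h3 := congrArg Complex.normSq h2
  rw [Complex.normSq_mul, c6_normSq_A_prime h6 hp hp2 hp3, mul_one, Complex.normSq_one] at h3
  exact h3.symm

theorem c6_normSq_A_6p {p : ℕ} (hp : p.Prime) (hp2 : p ≠ 2) (hp3 : p ≠ 3) :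
    Complex.normSq (aeval ω (cyclotomic (6 * p) ℤ)) = (p : ℝ) ^ 2 := by
  have hdiv : ¬ (2 ∣ 3 * p) := by
    have h2 : ¬ (2 ∣ p) := fun h => hp2 ((Nat.prime_dvd_prime_iff_eq (by norm_num) hp).mp h).symm
    omega
  have h := cyclotomic_expand_eq_cyclotomic_mul (by norm_num : Nat.Prime 2) hdiv ℤ
  have h2 := congrArg (aeval ω) h
  rw [expand_aeval, map_mul] at h2
  have hN : 3 * p * 2 = 6 * p := by ring
  rw [hN] at h2
  have h3 := congrArg Complex.normSq h2
  rw [Complex.normSq_mul, c6_normSq_A_3p h6 hp hp2 hp3, mul_one,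
    c3_normSq_A_3p (c6_sq_char3 h6) hp hp3] at h3
  exact h3.symm

end Char6

theorem c6_normSq_A_6pr {p : ℕ} (hp : p.Prime) (hp2 : p ≠ 2) (hp3 : p ≠ 3) :
    ∀ (r : ℕ) (ω : ℂ), ω ^ 2 - ω + 1 = 0 →
      Complex.normSq (aeval ω (cyclotomic (6 * p ^ (r + 1)) ℤ)) = (p : ℝ) ^ 2 := by
  intro r
  induction r with
  | zero => intro ω h6; rw [pow_one]; exact c6_normSq_A_6p h6 hp hp2 hp3
  | succ n ih =>
    intro ω h6
    have hdvd : p ∣ 6 * p ^ (n + 1) := Dvd.dvd.mul_left (dvd_pow_self p (Nat.succ_ne_zero n)) 6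
    have h := cyclotomic_expand_eq_cyclotomic hp hdvd ℤ
    have hN : 6 * p ^ (n + 1) * p = 6 * p ^ (n + 2) := by ring
    rw [hN] at h
    have h2 := congrArg (aeval ω) h
    rw [expand_aeval] at h2
    rw [← h2]
    exact ih (ω ^ p) (c6_pow_char h6 hp hp2 hp3)

-- the p = 2 chain for N = 6 * 2^r
theorem c3_normSq_add_one {ω : ℂ} (h3 : ω ^ 2 + ω + 1 = 0) :
    Complex.normSq (ω + 1) = 1 := by
  rw [Complex.normSq_apply]
  simp only [Complex.add_re, Complex.add_im, Complex.one_re, Complex.one_im]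
  nlinarith [c3_re h3, c3_im2 h3]

theorem c3_normSq_A_3two : ∀ (r : ℕ) (ω : ℂ), ω ^ 2 + ω + 1 = 0 →
    Complex.normSq (aeval ω (cyclotomic (3 * 2 ^ (r + 1)) ℤ)) = 4 := by
  intro r
  induction r with
  | zero =>
    intro ω h3
    have h := cyclotomic_expand_eq_cyclotomic_mul (by norm_num : Nat.Prime 3)
      (by norm_num : ¬ (3 ∣ 2)) ℤ
    have h2 := congrArg (aeval ω) h
    rw [expand_aeval, map_mul, c3_cube h3, aeval_cyc_prime_one (by norm_num : Nat.Prime 2)] at h2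
    have hA2 : aeval ω (cyclotomic 2 ℤ) = ω + 1 := by
      rw [cyclotomic_two]; simp [add_comm]
    have hN : (2 * 3 : ℕ) = 3 * 2 ^ (0 + 1) := by norm_num
    rw [hA2, hN] at h2
    have h4 := congrArg Complex.normSq h2
    rw [Complex.normSq_mul, c3_normSq_add_one h3, mul_one, Complex.normSq_natCast] at h4
    rw [← h4]; norm_num
  | succ n ih =>
    intro ω h3
    have hdvd : (2 : ℕ) ∣ 3 * 2 ^ (n + 1) :=
      Dvd.dvd.mul_left (dvd_pow_self 2 (Nat.succ_ne_zero n)) 3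
    have h := cyclotomic_expand_eq_cyclotomic (by norm_num : Nat.Prime 2) hdvd ℤ
    have hN : 3 * 2 ^ (n + 1) * 2 = 3 * 2 ^ (n + 2) := by ring
    rw [hN] at h
    have h2 := congrArg (aeval ω) h
    rw [expand_aeval] at h2
    rw [← h2]
    exact ih (ω ^ 2) (c3_sq_char h3)

theorem c6_normSq_A_6twor {ω : ℂ} (h6 : ω ^ 2 - ω + 1 = 0) (r : ℕ) :
    Complex.normSq (aeval ω (cyclotomic (6 * 2 ^ (r + 1)) ℤ)) = (2 : ℝ) ^ 2 := by
  have hdvd : (2 : ℕ) ∣ 3 * 2 ^ (r + 1) :=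
    Dvd.dvd.mul_left (dvd_pow_self 2 (Nat.succ_ne_zero r)) 3
  have h := cyclotomic_expand_eq_cyclotomic (by norm_num : Nat.Prime 2) hdvd ℤ
  have hN : 3 * 2 ^ (r + 1) * 2 = 6 * 2 ^ (r + 1) := by ring
  rw [hN] at h
  have h2 := congrArg (aeval ω) h
  rw [expand_aeval] at h2
  rw [← h2, c3_normSq_A_3two r (ω ^ 2) (c6_sq_char3 h6)]
  norm_num
/-- Main helper: if Φ_N(ω) has normSq p², then normSq of P(ω) is p² times a natural number. -/
theorem key_factor (N : ℕ) (p : ℕ) (ω : ℂ) (hω : ω ≠ 0)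
    (k : ℕ) (hk : 0 < k) (hωk : ω ^ k = 1)
    (c d : ℤ) (hsq : ω ^ 2 = c + d * ω)
    (e : ℤ) (hre : 2 * ω.re = (e : ℝ)) (hnorm : Complex.normSq ω = 1)
    (hA : Complex.normSq (aeval ω (cyclotomic N ℤ)) = (p : ℝ) ^ 2)
    (P Q : LaurentPolynomial ℤ) (hPQ : P = toLaurent (cyclotomic N ℤ) * Q) :
    ∃ m : ℕ, Complex.normSq (evalC ω P) = ((p ^ 2 * m : ℕ) : ℝ) := by
  obtain ⟨a, b, hab⟩ := evalC_rep ω hω k hk hωk c d hsq Q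
  have hm := normSq_rep ω e hre hnorm a b
  have hmul : evalC ω P = aeval ω (cyclotomic N ℤ) * evalC ω Q := by
    rw [hPQ]; exact evalC_mul_toLaurent ω hω _ Q
  have hge : (0 : ℝ) ≤ ((a ^ 2 + e * a * b + b ^ 2 : ℤ) : ℝ) := by
    rw [← hm]; exact Complex.normSq_nonneg _
  have hge' : (0 : ℤ) ≤ a ^ 2 + e * a * b + b ^ 2 := by exact_mod_cast hge
  refine ⟨(a ^ 2 + e * a * b + b ^ 2).toNat, ?_⟩
  have hcast : ((p ^ 2 * (a ^ 2 + e * a * b + b ^ 2).toNat : ℕ) : ℝ)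
      = (p : ℝ) ^ 2 * ((a ^ 2 + e * a * b + b ^ 2 : ℤ) : ℝ) := by
    rw [Nat.cast_mul]
    rw [show (((a ^ 2 + e * a * b + b ^ 2).toNat : ℕ) : ℝ) = ((a ^ 2 + e * a * b + b ^ 2 : ℤ) : ℝ) by
      rw [← Int.cast_natCast, Int.toNat_of_nonneg hge']]
    push_cast
    ring
  rw [hmul, Complex.normSq_mul, hA, hab, hm, hcast]

/-- Contradiction from a prime power `N = p^(j+1)` and `P(1) = 1`. -/
theorem primepow_case {p : ℕ} (hp : p.Prime) (j : ℕ)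
    (P Q : LaurentPolynomial ℤ) (hPQ : P = toLaurent (cyclotomic (p ^ (j + 1)) ℤ) * Q)
    (h1 : evalC 1 P = 1) : False := by
  haveI := Fact.mk hp
  have hA : aeval (1 : ℂ) (cyclotomic (p ^ (j + 1)) ℤ) = p := by
    rw [aeval_def]; exact eval₂_one_cyclotomic_prime_pow _ _
  obtain ⟨a, b, hab⟩ := evalC_rep 1 one_ne_zero 1 one_pos (pow_one 1) 1 0
    (by norm_num) Q
  have hmul : evalC 1 P = aeval (1 : ℂ) (cyclotomic (p ^ (j + 1)) ℤ) * evalC 1 Q := by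
    rw [hPQ]; exact evalC_mul_toLaurent 1 one_ne_zero _ Q
  rw [h1, hA, hab] at hmul
  have hint : ((p * (a + b) : ℤ) : ℂ) = ((1 : ℤ) : ℂ) := by
    push_cast
    linear_combination -hmul
  have hint' : (p * (a + b) : ℤ) = 1 := Int.cast_injective hint
  have hdvd : (p : ℤ) ∣ 1 := ⟨a + b, hint'.symm⟩
  have : (p : ℕ) ∣ 1 := by exact_mod_cast hdvd
  exact hp.one_lt.ne' (Nat.dvd_one.mp this)

theorem natmul_eq_one {p m : ℕ} (hp : p.Prime) (h : p ^ 2 * m = 1) : False := by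
  have h2 : p ^ 2 = 1 := Nat.eq_one_of_mul_eq_one_right h
  have := hp.two_le
  nlinarith

/-- Let `p` be prime, `r ∈ ℕ`, and `N = p^r`, `3p^r`, `4p^r`, or (for `p ≠ 3`) `6p^r`.
Then no Laurent polynomial `P ∈ ℤ[t,t⁻¹]` divisible by `Φ_N` can satisfy the special
value conditions of Jones polynomials of knots: `P(1) = 1`, `P(ζ₃) = 1`, `|P(i)| = 1`,
and `|P(ζ₆)| = 3^{s/2}` for some `s ∈ ℕ`. -/
theorem cyclotomic_not_dvd_jones (p : ℕ) (hp : p.Prime) (r : ℕ) (N : ℕ)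
    (hN : N = p ^ r ∨ N = 3 * p ^ r ∨ N = 4 * p ^ r ∨ (p ≠ 3 ∧ N = 6 * p ^ r)) :
    ¬ ∃ P : LaurentPolynomial ℤ,
        toLaurent (cyclotomic N ℤ) ∣ P ∧
        evalC 1 P = 1 ∧
        evalC (Complex.exp (2 * Real.pi * Complex.I / 3)) P = 1 ∧
        ‖evalC Complex.I P‖ = 1 ∧
        ∃ s : ℕ, ‖evalC (Complex.exp (Real.pi * Complex.I / 3)) P‖ =
          (3 : ℝ) ^ ((s : ℝ) / 2) := by
  rintro ⟨P, ⟨Q, hPQ⟩, h1, hz3, hz4, s, hz6⟩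
  -- the primitive cube root of unity
  set ζ3 : ℂ := Complex.exp (2 * Real.pi * Complex.I / 3) with hζ3def
  have hprim3 : IsPrimitiveRoot ζ3 3 := by
    have := Complex.isPrimitiveRoot_exp 3 (by norm_num)
    simpa [hζ3def] using this
  have hc3 : ζ3 ^ 2 + ζ3 + 1 = 0 := by
    have hpow := hprim3.pow_eq_one
    have hne : ζ3 ≠ 1 := hprim3.ne_one (by norm_num)
    have hfac : (ζ3 - 1) * (ζ3 ^ 2 + ζ3 + 1) = 0 := by linear_combination hpow
    exact (mul_eq_zero.mp hfac).resolve_left (sub_ne_zero.mpr hne)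
  -- the primitive sixth root of unity
  set ζ6 : ℂ := Complex.exp (Real.pi * Complex.I / 3) with hζ6def
  have hprim6 : IsPrimitiveRoot ζ6 6 := by
    have := Complex.isPrimitiveRoot_exp 6 (by norm_num)
    have harg : 2 * (Real.pi : ℂ) * Complex.I / ((6 : ℕ) : ℂ) =
        (Real.pi : ℂ) * Complex.I / 3 := by push_cast; ring
    rwa [harg] at this
  have hc6 : ζ6 ^ 2 - ζ6 + 1 = 0 := by
    have hpow : ζ6 ^ 6 = 1 := hprim6.pow_eq_one
    have hne3 : ζ6 ^ 3 ≠ 1 := hprim6.pow_ne_one_of_pos_of_lt (by norm_num) (by norm_num)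
    have hcube : ζ6 ^ 3 = -1 := by
      have hfac : (ζ6 ^ 3 - 1) * (ζ6 ^ 3 + 1) = 0 := by linear_combination hpow
      have := (mul_eq_zero.mp hfac).resolve_left (sub_ne_zero.mpr hne3)
      linear_combination this
    have hne1 : ζ6 ≠ -1 := by
      intro h
      have hsq : ζ6 ^ 2 ≠ 1 := hprim6.pow_ne_one_of_pos_of_lt (by norm_num) (by norm_num)
      rw [h] at hsq; norm_num at hsq
    have hfac : (ζ6 + 1) * (ζ6 ^ 2 - ζ6 + 1) = 0 := by linear_combination hcube
    refine (mul_eq_zero.mp hfac).resolve_left ?_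
    intro h
    exact hne1 (eq_neg_of_add_eq_zero_left h)
  rcases hN with hN | hN | hN | ⟨hp3, hN⟩
  · -- N = p ^ r
    cases r with
    | zero =>
      rw [pow_zero] at hN
      subst hN
      have hA : aeval (1 : ℂ) (cyclotomic 1 ℤ) = 0 := by simp [cyclotomic_one]
      have : evalC 1 P = 0 := by
        rw [hPQ, evalC_mul_toLaurent 1 one_ne_zero, hA, zero_mul]
      rw [h1] at this; norm_num at this
    | succ j =>
      subst hN
      exact primepow_case hp j P Q hPQ h1
  · -- N = 3 * p ^ r
    by_cases hp3 : p = 3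
    · subst hp3
      have h3N : 3 * 3 ^ r = 3 ^ (r + 1) := by ring
      rw [h3N] at hN
      subst hN
      exact primepow_case hp r P Q hPQ h1
    · cases r with
      | zero =>
        rw [pow_zero, mul_one] at hN
        subst hN
        have hA : aeval ζ3 (cyclotomic 3 ℤ) = 0 := by
          haveI := Fact.mk (by norm_num : Nat.Prime 3)
          rw [cyclotomic_prime]
          simp only [map_sum, map_pow, aeval_X]
          rw [Finset.sum_range_succ, Finset.sum_range_succ, Finset.sum_range_one]
          linear_combination hc3
        have : evalC ζ3 P = 0 := by
          rw [hPQ, evalC_mul_toLaurent ζ3 (c3_ne_zero hc3), hA, zero_mul]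
        rw [hz3] at this; norm_num at this
      | succ j =>
        subst hN
        obtain ⟨m, hm⟩ := key_factor (3 * p ^ (j + 1)) p ζ3 (c3_ne_zero hc3)
          3 (by norm_num) (c3_cube hc3) (-1) (-1)
          (by push_cast; linear_combination hc3)
          (-1) (by rw [c3_re hc3]; norm_num) (c3_normSq hc3)
          (c3_normSq_A_3pr hp hp3 j ζ3 hc3) P Q hPQ
        rw [hz3, Complex.normSq_one] at hm
        exact natmul_eq_one hp (by exact_mod_cast hm.symm)
  · -- N = 4 * p ^ r
    by_cases hp2 : p = 2
    · subst hp2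
      have h2N : 4 * 2 ^ r = 2 ^ (r + 1 + 1) := by ring
      rw [h2N] at hN
      subst hN
      exact primepow_case hp (r + 1) P Q hPQ h1
    · cases r with
      | zero =>
        rw [pow_zero, mul_one] at hN
        subst hN
        have hA : aeval Complex.I (cyclotomic 4 ℤ) = 0 := by
          have h := cyclotomic_expand_eq_cyclotomic (by norm_num : Nat.Prime 2)
            (dvd_refl 2) ℤ
          have h2 := congrArg (aeval Complex.I) h
          rw [expand_aeval, Complex.I_sq] at h2
          have hN4 : (2 * 2 : ℕ) = 4 := by norm_num
          rw [hN4] at h2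
          rw [← h2, cyclotomic_two]
          simp
        have : evalC Complex.I P = 0 := by
          rw [hPQ, evalC_mul_toLaurent Complex.I Complex.I_ne_zero, hA, zero_mul]
        rw [this] at hz4
        simp at hz4
      | succ j =>
        subst hN
        have hI4 : Complex.I ^ 4 = 1 := by
          rw [show (4 : ℕ) = 2 * 2 from rfl, pow_mul, Complex.I_sq]; norm_num
        obtain ⟨m, hm⟩ := key_factor (4 * p ^ (j + 1)) p Complex.I Complex.I_ne_zero
          4 (by norm_num) hI4 (-1) 0
          (by push_cast; rw [Complex.I_sq]; ring)
          0 (by rw [Complex.I_re]; norm_num) Complex.normSq_I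
          (c4_normSq_A_4pr hp hp2 j Complex.I Complex.I_sq) P Q hPQ
        have hns : Complex.normSq (evalC Complex.I P) = 1 := by
          rw [← Complex.sq_norm, hz4]; norm_num
        rw [hns] at hm
        exact natmul_eq_one hp (by exact_mod_cast hm.symm)
  · -- N = 6 * p ^ r
    cases r with
    | zero =>
      rw [pow_zero, mul_one] at hN
      subst hN
      have hA : aeval ζ6 (cyclotomic 6 ℤ) = 0 := by
        have h := cyclotomic_expand_eq_cyclotomic_mul (by norm_num : Nat.Prime 3)
          (by norm_num : ¬ (3 ∣ 2)) ℤ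
        have h2 := congrArg (aeval ζ6) h
        rw [expand_aeval, map_mul, c6_cube hc6, cyclotomic_two] at h2
        simp only [map_add, aeval_X, map_one] at h2
        have hzero : (-1 : ℂ) + 1 = 0 := by norm_num
        rw [hzero] at h2
        have hN6 : (2 * 3 : ℕ) = 6 := by norm_num
        rw [hN6] at h2
        have hne : ζ6 + 1 ≠ 0 := by
          intro h
          have h' : ζ6 = -1 := eq_neg_of_add_eq_zero_left h
          rw [h'] at hc6; norm_num at hc6
        exact (mul_eq_zero.mp h2.symm).resolve_right hne
      have hPz : evalC ζ6 P = 0 := by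
        rw [hPQ, evalC_mul_toLaurent ζ6 (c6_ne_zero hc6), hA, zero_mul]
      rw [hPz] at hz6
      simp only [norm_zero] at hz6
      exact absurd hz6.symm (Real.rpow_pos_of_pos (by norm_num) _).ne'
    | succ j =>
      subst hN
      have hA : Complex.normSq (aeval ζ6 (cyclotomic (6 * p ^ (j + 1)) ℤ)) = (p : ℝ) ^ 2 := by
        by_cases hp2 : p = 2
        · subst hp2; exact c6_normSq_A_6twor hc6 j
        · exact c6_normSq_A_6pr hp hp2 hp3 j ζ6 hc6
      obtain ⟨m, hm⟩ := key_factor (6 * p ^ (j + 1)) p ζ6 (c6_ne_zero hc6)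
        6 (by norm_num) (c6_six hc6) (-1) 1
        (by push_cast; linear_combination hc6)
        1 (by rw [c6_re hc6]; norm_num) (c6_normSq hc6)
        hA P Q hPQ
      have hns : Complex.normSq (evalC ζ6 P) = ((3 ^ s : ℕ) : ℝ) := by
        rw [← Complex.sq_norm, hz6, ← Real.rpow_natCast ((3:ℝ) ^ ((s : ℝ)/2)) 2,
          ← Real.rpow_mul (by norm_num : (0:ℝ) ≤ 3)]
        push_cast
        rw [div_mul_cancel₀ _ (by norm_num : (2:ℝ) ≠ 0), Real.rpow_natCast]
      rw [hns] at hm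
      have hnat : p ^ 2 * m = 3 ^ s := by exact_mod_cast hm.symm
      have hdvd : p ∣ 3 ^ s := by
        rw [← hnat]
        exact Dvd.dvd.mul_right (dvd_pow_self p two_ne_zero) m
      have := (Nat.prime_dvd_prime_iff_eq hp (by norm_num)).mp (hp.dvd_of_dvd_pow hdvd)
      exact hp3 this
end

section
/- The set S = {z ∈ ℂ : there exists an integer k ≥ 2 with z^{k²+k−1} = −1 and z ≠ −1} is contained in the unit circle {z ∈ ℂ : |z| = 1} and is dense in the unit circle. -/
open Complex Real

/-- The set `S = {z ∈ ℂ : ∃ k ≥ 2, z^{k²+k-1} = -1 ∧ z ≠ -1}` is contained in the unit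
circle and is dense in the unit circle. -/
theorem roots_dense_in_circle :
    {z : ℂ | ∃ k : ℕ, 2 ≤ k ∧ z ^ (k ^ 2 + k - 1) = -1 ∧ z ≠ -1} ⊆
      {z : ℂ | ‖z‖ = 1} ∧
    {z : ℂ | ‖z‖ = 1} ⊆
      closure {z : ℂ | ∃ k : ℕ, 2 ≤ k ∧ z ^ (k ^ 2 + k - 1) = -1 ∧ z ≠ -1} := by
  constructor
  · rintro z ⟨k, hk2, h1, -⟩
    have hk : k * k ≥ 4 := Nat.mul_le_mul hk2 hk2
    have hn : k ^ 2 + k - 1 ≠ 0 := by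
      have : k ^ 2 = k * k := sq k
      omega
    have habs : ‖z‖ ^ (k ^ 2 + k - 1) = 1 := by
      rw [← norm_pow, h1]
      simp
    have h0 : 0 ≤ ‖z‖ := norm_nonneg z
    rcases lt_trichotomy ‖z‖ 1 with h | h | h
    · have := pow_lt_one₀ h0 h hn
      rw [habs] at this; linarith
    · exact h
    · have := one_lt_pow₀ h hn
      rw [habs] at this; linarith
  · intro w hw
    rw [Metric.mem_closure_iff]
    intro ε hε
    obtain ⟨k, hk⟩ := exists_nat_gt (max 2 (4 * π / ε))
    have hk2 : 2 ≤ k := by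
      have h2 : (2:ℝ) < k := lt_of_le_of_lt (le_max_left _ _) hk
      exact_mod_cast h2.le
    have hkε : 4 * π / ε < k := lt_of_le_of_lt (le_max_right _ _) hk
    set n : ℕ := k ^ 2 + k - 1 with hn_def
    have hkk : k ^ 2 = k * k := sq k
    have hkk4 : 4 ≤ k * k := Nat.mul_le_mul hk2 hk2
    have hn5 : 5 ≤ n := by omega
    have hkn : k ≤ n := by omega
    have hnR : (0:ℝ) < n := by positivity
    have hπ : (0:ℝ) < π := Real.pi_pos
    have hεn : 4 * π < ε * n := by
      have hkR : (4 * π / ε) < (n:ℝ) := lt_of_lt_of_le hkε (by exact_mod_cast hkn)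
      calc 4 * π = (4 * π / ε) * ε := by field_simp
        _ < n * ε := by apply mul_lt_mul_of_pos_right hkR hε
        _ = ε * n := by ring
    -- n is odd
    have hnoddZ : ∃ c : ℤ, (n:ℤ) = 2 * c + 1 := by
      have he : Even ((k:ℤ) * ((k:ℤ) + 1)) := Int.even_mul_succ_self _
      obtain ⟨c, hc⟩ := he
      refine ⟨c - 1, ?_⟩
      have : (n:ℤ) = (k:ℤ) ^ 2 + k - 1 := by
        have : (1:ℕ) ≤ k ^ 2 + k := by omega
        push_cast [hn_def, Nat.cast_sub this]
        ring
      rw [this]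
      push_cast at hc ⊢
      nlinarith [hc]
    set θ : ℝ := Complex.arg w with hθ_def
    have hθ1 : -π < θ := Complex.neg_pi_lt_arg w
    have hθ2 : θ ≤ π := Complex.arg_le_pi w
    set t : ℝ := θ * n / π with ht_def
    have htn : t ≤ n := by
      rw [ht_def, div_le_iff₀ hπ]
      nlinarith
    have htn' : -(n:ℝ) < t := by
      rw [ht_def, lt_div_iff₀ hπ]
      nlinarith
    set m : ℤ := 2 * ⌊t / 2⌋ + 1 with hm_def
    set M : ℤ := (n:ℤ) - 2 with hM_def
    have hM3 : (3:ℤ) ≤ M := by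
      have : (5:ℤ) ≤ (n:ℤ) := by exact_mod_cast hn5
      omega
    set m' : ℤ := max (-M) (min m M) with hm'_def
    have hmub : (m:ℝ) ≤ t + 1 := by
      have := Int.floor_le (t / 2)
      push_cast [hm_def]
      linarith
    have hmlb : t - 1 < (m:ℝ) := by
      have := Int.lt_floor_add_one (t / 2)
      push_cast [hm_def]
      linarith
    -- m' bounds: |m'| ≤ M and |t - m'| ≤ 3
    have hMnR : (M:ℝ) = (n:ℝ) - 2 := by rw [hM_def]; push_cast; ring
    have hm'bd : |(t - (m':ℝ))| ≤ 3 ∧ -M ≤ m' ∧ m' ≤ M := by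
      rcases le_or_gt m (-M) with h1 | h1
      · have hmin : min m M = m := min_eq_left (by omega)
        have hmax : m' = -M := by rw [hm'_def, hmin]; exact max_eq_left (by omega)
        have h1R : (m:ℝ) ≤ -(M:ℝ) := by exact_mod_cast h1
        rw [hmax]
        refine ⟨?_, by omega, by omega⟩
        have hcast : ((-M : ℤ):ℝ) = -(M:ℝ) := by push_cast; ring
        rw [hcast, abs_le]
        constructor <;> linarith
      · rcases le_or_gt M m with h2 | h2
        · have hmin : min m M = M := min_eq_right h2
          have hmax : m' = M := by rw [hm'_def, hmin]; exact max_eq_right (by omega)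
          have h2R : (M:ℝ) ≤ (m:ℝ) := by exact_mod_cast h2
          rw [hmax]
          refine ⟨?_, by omega, by omega⟩
          rw [abs_le]
          constructor <;> linarith
        · have hmin : min m M = m := min_eq_left (le_of_lt h2)
          have hmax : m' = m := by rw [hm'_def, hmin]; exact max_eq_right (by omega)
          have h1R : -(M:ℝ) < (m:ℝ) := by exact_mod_cast h1
          have h2R : (m:ℝ) < (M:ℝ) := by exact_mod_cast h2
          rw [hmax]
          refine ⟨?_, by omega, by omega⟩
          rw [abs_le]
          constructor <;> linarith
    obtain ⟨hdist3, hm'lb, hm'ub⟩ := hm'bd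
    -- m' is odd
    have hm'odd : ∃ j : ℤ, m' = 2 * j + 1 := by
      obtain ⟨c, hc⟩ := hnoddZ
      have hMZ : M = 2 * (c - 1) + 1 := by rw [hM_def, hc]; ring
      rcases max_choice (-M) (min m M) with h | h <;> rw [hm'_def, h]
      · exact ⟨-c, by rw [hMZ]; ring⟩
      · rcases min_choice m M with h' | h' <;> rw [h']
        · exact ⟨⌊t / 2⌋, rfl⟩
        · exact ⟨c - 1, hMZ⟩
    obtain ⟨j, hj⟩ := hm'odd
    set α : ℝ := m' * π / n with hα_def
    set z : ℂ := Complex.exp (α * Complex.I) with hz_def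
    have hnC : (n:ℂ) ≠ 0 := by exact_mod_cast (by omega : n ≠ 0)
    have hαC : ((α:ℝ):ℂ) = ((m':ℤ):ℂ) * (π:ℂ) / (n:ℂ) := by
      rw [hα_def]; push_cast; ring
    have hm'C : ((m':ℤ):ℂ) = 2 * (j:ℂ) + 1 := by rw [hj]; push_cast; ring
    have hzn : z ^ n = -1 := by
      rw [hz_def, ← Complex.exp_nat_mul]
      have h1 : (n:ℂ) * (((α:ℝ):ℂ) * Complex.I) =
          (j:ℂ) * (2 * (π:ℂ) * Complex.I) + (π:ℂ) * Complex.I := by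
        rw [hαC, hm'C]
        field_simp
      rw [h1, Complex.exp_add, Complex.exp_int_mul_two_pi_mul_I, Complex.exp_pi_mul_I, one_mul]
    have hαbd : |α| < π := by
      have h1 : |(m':ℝ)| ≤ (n:ℝ) - 2 := by
        rw [abs_le]; constructor
        · rw [← hMnR]; exact_mod_cast (by omega : -(M:ℤ) ≤ m')
        · rw [← hMnR]; exact_mod_cast hm'ub
      rw [hα_def, abs_div, abs_mul, abs_of_pos hπ, abs_of_pos hnR, div_lt_iff₀ hnR]
      nlinarith
    have hzne : z ≠ -1 := by
      intro hcontra
      have hre : Real.cos α = -1 := by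
        rw [← Complex.exp_ofReal_mul_I_re, ← hz_def, hcontra]
        simp
      rw [Real.cos_eq_neg_one_iff] at hre
      obtain ⟨c, hc⟩ := hre
      rw [abs_lt] at hαbd
      rcases le_or_gt 0 c with h | h
      · have h0 : (0:ℝ) ≤ c := by exact_mod_cast h
        have := mul_nonneg h0 (by positivity : (0:ℝ) ≤ 2 * π)
        linarith [hαbd.2]
      · have h1 : (c:ℝ) ≤ -1 := by exact_mod_cast (by omega : c ≤ -1)
        have := mul_le_mul_of_nonneg_right h1 (by positivity : (0:ℝ) ≤ 2 * π)
        linarith [hαbd.1]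
    refine ⟨z, ⟨k, hk2, hzn, hzne⟩, ?_⟩
    -- distance bound
    have hwz : w = Complex.exp (θ * Complex.I) := by
      conv_lhs => rw [← Complex.norm_mul_exp_arg_mul_I w]
      rw [hw]
      simp [hθ_def]
    have hlip := (lipschitzWith_circleMap 0 1).dist_le_mul θ α
    simp only [circleMap, zero_add, one_mul, Complex.ofReal_one] at hlip
    have hlip' : dist w z ≤ dist θ α := by
      rw [hwz, hz_def]
      simpa using hlip
    have hθt : θ = t * π / n := by
      rw [ht_def]; field_simp
    have hda : dist θ α = |t - m'| * (π / n) := by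
      rw [Real.dist_eq, hθt, hα_def, ← abs_of_pos (div_pos hπ hnR), ← abs_mul]
      congr 1
      field_simp
    calc dist w z ≤ |t - m'| * (π / n) := by rw [← hda]; exact hlip'
      _ ≤ 3 * (π / n) := by
          apply mul_le_mul_of_nonneg_right hdist3 (le_of_lt (div_pos hπ hnR))
      _ < ε := by
          rw [show 3 * (π / (n:ℝ)) = 3 * π / n by ring, div_lt_iff₀ hnR]
          linarith
end
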